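/- arXiv:1310.4915 — 3 statements merged into one kernel-verified Lean document; each statement's English description precedes it below -/
import Mathlib

section
/- Assume f₀,f₁,f₂,f₃ are linearly independent, and that the fiber π₂⁻¹(p) over a closed k-rational point p of coordinates (p₀:p₁:p₂:p₃) has dimension 1, with unmixed one-dimensional component defined by h_p ∈ S. Let ℓ_p be a linear form in x₀,…,x₃ with ℓ_p(p₀,…,p₃) = 1 and set ℓᵢ(x) := xᵢ − pᵢ·ℓ_p(x). Then h_p = gcd(ℓ₀(f),…,ℓ₃(f)), and I = (ℓ_p(f)) + h_p·(g₀,g₁,g₂,g₃) where the gᵢ ∈ S are defined by ℓᵢ(f) = h_p·gᵢ, and these satisfy ℓ_p(g₀,…,g₃) = 0. -/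
/-!
STATEMENT 7 (Lemma `1fiber`, first part):
Assume `f₀,…,f₃` are linearly independent (and have no common factor), and that the fiber
`π₂⁻¹(p)` over a closed `k`-rational point `p = (p₀:p₁:p₂:p₃)` has dimension 1, with
unmixed one-dimensional component defined by `h_p ∈ S`.  Let `ℓ_p` be a linear form with
`ℓ_p(p₀,…,p₃) = 1` and `ℓᵢ(x) := xᵢ − pᵢ·ℓ_p(x)`.  Then `h_p = gcd(ℓ₀(f),…,ℓ₃(f))`, and
`I = (ℓ_p(f)) + h_p·(g₀,…,g₃)` where `ℓᵢ(f) = h_p·gᵢ`, and `ℓ_p(g₀,…,g₃) = 0`.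
-/

open MvPolynomial

noncomputable section

abbrev S3 (k : Type) [Field k] := MvPolynomial (Fin 3) k
abbrev R4 (k : Type) [Field k] := MvPolynomial (Fin 4) k
/-- `T = S[x₀,…,x₃]`. -/
abbrev TT (k : Type) [Field k] := MvPolynomial (Fin 4) (S3 k)

variable (k : Type) [Field k]

/-- The graded maximal ideal `m = (s₀,s₁,s₂)` of `S`. -/
def mId : Ideal (S3 k) := Ideal.span {X 0, X 1, X 2}

/-- Saturation of an ideal of `S` with respect to `m`. -/
def satId (J : Ideal (S3 k)) : Ideal (S3 k) := ⨆ n : ℕ, Submodule.colon J (((mId k) ^ n : Ideal (S3 k)) : Set (S3 k))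

/-- Initial degree: the smallest degree of a nonzero homogeneous element. -/
def indeg (J : Ideal (S3 k)) : ℕ :=
  sInf {n | ∃ g ∈ J, g ≠ 0 ∧ MvPolynomial.IsHomogeneous g n}

/-- The defining equations of the fiber of `π₂ : Proj(𝒮_I) → ℙ³` over the `k`-rational
point of coordinates `pc = (p₀ : p₁ : p₂ : p₃)`: the specializations `∑ pᵢ gᵢ` at `pc` of
the syzygy forms `∑ gᵢ xᵢ` (where `∑ gᵢ fᵢ = 0`) defining the graph `Γ`. -/
def fibEqns (f : Fin 4 → S3 k) (pc : Fin 4 → k) : Set (S3 k) :=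
  {q | ∃ g : Fin 4 → S3 k, (∑ i, g i * f i) = 0 ∧ q = ∑ i, pc i • g i}

/-- `h` defines the unmixed (purely 1-dimensional) component of the fiber over `pc`, and
this fiber has dimension `1`:  `h` is a gcd of the defining equations of the fiber, and it
is a nonzero nonunit. -/
def IsUnmixedPartOfOneDimFiber (f : Fin 4 → S3 k) (pc : Fin 4 → k) (h : S3 k) : Prop :=
  h ≠ 0 ∧ ¬ IsUnit h ∧ (∀ q ∈ fibEqns k f pc, h ∣ q) ∧
    (∀ h' : S3 k, (∀ q ∈ fibEqns k f pc, h' ∣ q) → h' ∣ h)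

theorem stmt7 (k : Type) [Field k] (d : ℕ) (f : Fin 4 → S3 k)
    (hf : ∀ i, MvPolynomial.IsHomogeneous (f i) d)
    -- the `fᵢ` are linearly independent and have no common factor
    (hli : LinearIndependent k f)
    (hcf : ∀ h : S3 k, (∀ i, h ∣ f i) → IsUnit h)
    -- the fiber over the point `pc` is 1-dimensional with unmixed component defined by `h`
    (pc : Fin 4 → k) (h : S3 k) (hfib : IsUnmixedPartOfOneDimFiber k f pc h)
    -- a linear form `ℓ_p` with `ℓ_p(p₀,…,p₃) = 1`
    (a : Fin 4 → k) (ha : (∑ i, a i * pc i) = 1) :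
    -- `h = gcd(ℓ₀(f),…,ℓ₃(f))`
    (∀ i, h ∣ (f i - pc i • (∑ j, a j • f j))) ∧
    (∀ h' : S3 k, (∀ i, h' ∣ (f i - pc i • (∑ j, a j • f j))) → h' ∣ h) ∧
    -- `I = (ℓ_p(f)) + h·(g₀,…,g₃)` with `ℓᵢ(f) = h·gᵢ` and `ℓ_p(g₀,…,g₃) = 0`
    (∀ g : Fin 4 → S3 k, (∀ i, f i - pc i • (∑ j, a j • f j) = h * g i) →
      Ideal.span (Set.range f)
          = Ideal.span {∑ j, a j • f j} + Ideal.span (Set.range fun i => h * g i) ∧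
        (∑ i, a i • g i) = 0) := by
  obtain ⟨hne, hnu, hdvd, hgcd⟩ := hfib
  set L : S3 k := ∑ j, a j • f j with hL
  -- Part 1: h divides each ℓᵢ(f)
  have part1 : ∀ i, h ∣ (f i - pc i • L) := by
    intro i
    apply hdvd
    refine ⟨fun j => a j • f i - (if j = i then L else 0), ?_, ?_⟩
    · have e1 : (∑ j, (a j • f i - (if j = i then L else 0)) * f j)
        = (∑ j, a j • (f i * f j)) - ∑ j, (if j = i then L else 0) * f j := by
        rw [← Finset.sum_sub_distrib]
        exact Finset.sum_congr rfl fun j _ => by rw [sub_mul, smul_mul_assoc]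
      rw [e1]
      simp only [ite_mul, zero_mul, Finset.sum_ite_eq', Finset.mem_univ, if_true]
      have e2 : (∑ j, a j • (f i * f j)) = f i * L := by
        rw [hL, Finset.mul_sum]
        exact Finset.sum_congr rfl fun j _ => by rw [mul_smul_comm]
      rw [e2]; ring
    · have e1 : (∑ j, pc j • (a j • f i - (if j = i then L else 0)))
        = (∑ j, (pc j * a j) • f i) - ∑ j, pc j • (if j = i then L else 0) := by
        rw [← Finset.sum_sub_distrib]
        exact Finset.sum_congr rfl fun j _ => by rw [smul_sub, smul_smul]
      rw [e1, ← Finset.sum_smul]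
      have h1 : (∑ j, pc j * a j) = 1 := by
        rw [← ha]; exact Finset.sum_congr rfl fun j _ => mul_comm _ _
      rw [h1, one_smul]
      simp only [smul_ite, smul_zero, Finset.sum_ite_eq', Finset.mem_univ, if_true]
  refine ⟨part1, ?_, ?_⟩
  · -- Part 2: gcd property
    intro h' hd'
    apply hgcd
    rintro q ⟨g, hg, rfl⟩
    set q : S3 k := ∑ i, pc i • g i with hq
    have key : q * L = -∑ j, g j * (f j - pc j • L) := by
      have e1 : (∑ j, g j * (f j - pc j • L))
          = (∑ j, g j * f j) - ∑ j, pc j • (g j * L) := by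
        rw [← Finset.sum_sub_distrib]
        refine Finset.sum_congr rfl fun j _ => ?_
        rw [mul_sub]
        congr 1
        rw [mul_smul_comm]
      rw [e1, hg, zero_sub, neg_neg, Finset.sum_mul]
      exact Finset.sum_congr rfl fun j _ => by rw [smul_mul_assoc]
    have hdqL : h' ∣ q * L := by
      rw [key]
      exact (Finset.dvd_sum fun j _ => Dvd.dvd.mul_left (hd' j) _).neg_right
    have hrp : IsRelPrime h' L := by
      intro d hd1 hd2
      apply hcf
      intro i
      have e : f i = (f i - pc i • L) + pc i • L := (sub_add_cancel _ _).symm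
      rw [e]
      exact dvd_add (hd1.trans (hd' i)) (by rw [smul_eq_C_mul]; exact hd2.mul_left _)
    exact hrp.dvd_of_dvd_mul_right hdqL
  · -- Part 3
    intro g hg
    constructor
    · apply le_antisymm
      · rw [Ideal.span_le]
        rintro _ ⟨i, rfl⟩
        rw [eq_add_of_sub_eq (hg i)]
        apply Submodule.add_mem
        · exact Ideal.mem_sup_right (Ideal.subset_span ⟨i, rfl⟩)
        · rw [smul_eq_C_mul]
          exact Ideal.mem_sup_left (Ideal.mul_mem_left _ _ (Ideal.subset_span rfl))
      · apply sup_le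
        · rw [Ideal.span_le, Set.singleton_subset_iff, hL]
          apply Submodule.sum_mem
          intro j _
          rw [smul_eq_C_mul]
          exact Ideal.mul_mem_left _ _ (Ideal.subset_span ⟨j, rfl⟩)
        · rw [Ideal.span_le]
          rintro _ ⟨i, rfl⟩
          simp only
          rw [← hg i]
          apply Submodule.sub_mem
          · exact Ideal.subset_span ⟨i, rfl⟩
          · rw [smul_eq_C_mul]
            apply Ideal.mul_mem_left
            rw [hL]
            apply Submodule.sum_mem
            intro j _
            rw [smul_eq_C_mul]
            exact Ideal.mul_mem_left _ _ (Ideal.subset_span ⟨j, rfl⟩)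
    · have hz : h * (∑ i, a i • g i) = 0 := by
        rw [Finset.mul_sum]
        have e1 : (∑ i, h * a i • g i) = ∑ i, a i • (f i - pc i • L) :=
          Finset.sum_congr rfl fun i _ => by rw [mul_smul_comm, ← hg i]
        rw [e1]
        have e2 : (∑ i, a i • (f i - pc i • L)) = L - (∑ i, (a i * pc i)) • L := by
          rw [Finset.sum_smul, ← Finset.sum_sub_distrib, hL]
          exact Finset.sum_congr rfl fun i _ => by rw [smul_sub, smul_smul]
        rw [e2, ha, one_smul, sub_self]
      rcases mul_eq_zero.mp hz with h0 | h0
      · exact absurd h0 hne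
      · exact h0

end
end

section
/- Assume f₀,f₁,f₂,f₃ are linearly independent, the fiber over a closed k-rational point p of coordinates (p₀:p₁:p₂:p₃) has dimension 1 with unmixed component defined by h_p ∈ S, and let ℓ_p be a linear form with ℓ_p(p₀,…,p₃) = 1, ℓᵢ(x) := xᵢ − pᵢ·ℓ_p(x), and gᵢ ∈ S with ℓᵢ(f) = h_p·gᵢ. Then (ℓ_p(f)) + h_p·(g₀,…,g₃)^sat ⊆ I^sat ⊆ (ℓ_p(f)) + (h_p). -/
/-!
STATEMENT 8 (Lemma `1fiber`, second part):
With the hypotheses and notation of Lemma `1fiber` (`f₀,…,f₃` linearly independent with no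
common factor, fiber over the `k`-rational point `p` of dimension 1 with unmixed component
defined by `h_p`, `ℓ_p` a linear form with `ℓ_p(p) = 1`, `ℓᵢ(x) = xᵢ − pᵢℓ_p(x)`, and
`gᵢ` with `ℓᵢ(f) = h_p·gᵢ`):
`(ℓ_p(f)) + h_p·(g₀,…,g₃)^sat ⊆ I^sat ⊆ (ℓ_p(f)) + (h_p)`.
-/

open MvPolynomial

noncomputable section

variable (k : Type) [Field k]

namespace Stmt8Aux

variable {k : Type} [Field k]

lemma prime_X3 (i : Fin 3) : Prime (X i : S3 k) := by
  have h0 : Prime (X 0 : S3 k) := by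
    rw [← MulEquiv.prime_iff (finSuccEquiv k 2).toMulEquiv]
    simpa [finSuccEquiv_X_zero] using
      (Polynomial.prime_X : Prime (Polynomial.X (R := MvPolynomial (Fin 2) k)))
  rw [← MulEquiv.prime_iff (renameEquiv k (Equiv.swap i 0)).toMulEquiv]
  simpa [renameEquiv_apply, rename_X] using h0

lemma not_X_dvd_X {i j : Fin 3} (hij : i ≠ j) : ¬ (X i : S3 k) ∣ X j := by
  rintro ⟨c, hc⟩
  have := congrArg (eval (fun t => if t = j then (1 : k) else 0)) hc
  simp [eval_X, hij] at this

lemma dvd_of_dvd_mul_pow {x y : S3 k} (hx : Prime x) (hy : Prime y)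
    (hxy : ¬ x ∣ y) {N : ℕ} (h : S3 k) :
    ∀ z : S3 k, h ∣ z * x ^ N → h ∣ z * y ^ N → h ∣ z := by
  induction h using UniqueFactorizationMonoid.induction_on_prime with
  | h₁ =>
    intro z h1 _
    rw [zero_dvd_iff] at h1 ⊢
    exact (mul_eq_zero.mp h1).resolve_right (pow_ne_zero _ hx.ne_zero)
  | h₂ u hu => exact fun z _ _ => hu.dvd
  | h₃ a p ha hp ih =>
    intro z h1 h2
    by_cases hpz : p ∣ z
    · obtain ⟨z', rfl⟩ := hpz
      rw [mul_assoc, mul_dvd_mul_iff_left hp.ne_zero] at h1 h2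
      exact mul_dvd_mul_left p (ih z' h1 h2)
    · exfalso
      have hpx : p ∣ x :=
        hp.dvd_of_dvd_pow (((hp.dvd_mul.mp ((dvd_mul_right p a).trans h1))).resolve_left hpz)
      have hpy : p ∣ y :=
        hp.dvd_of_dvd_pow (((hp.dvd_mul.mp ((dvd_mul_right p a).trans h2))).resolve_left hpz)
      exact hxy (((hp.associated_of_dvd hx hpx).symm.dvd).trans hpy)

end Stmt8Aux

namespace Stmt8Aux
variable {k : Type} [Field k]

lemma divM_X2 (N : ℕ) (w : S3 k) :
    (X 2 ^ N * w).divMonomial (Finsupp.single 2 N) = w := by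
  rw [X_pow_eq_monomial]
  exact divMonomial_monomial_mul _ _

lemma divM_sub (s : Fin 3 →₀ ℕ) (x y : S3 k) :
    (x - y).divMonomial s = x.divMonomial s - y.divMonomial s := by
  apply MvPolynomial.ext
  intro m
  simp [coeff_divMonomial, coeff_sub]

lemma divM_mul (N : ℕ) {j : Fin 3} (hj : j ≠ 2) (w : S3 k) :
    (X j ^ N * w).divMonomial (Finsupp.single 2 N)
      = X j ^ N * w.divMonomial (Finsupp.single 2 N) := by
  apply MvPolynomial.ext
  intro m
  rw [coeff_divMonomial, X_pow_eq_monomial, coeff_monomial_mul', coeff_monomial_mul']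
  have hkey : Finsupp.single j N ≤ Finsupp.single 2 N + m ↔ Finsupp.single j N ≤ m := by
    rw [Finsupp.single_le_iff, Finsupp.single_le_iff, Finsupp.add_apply,
      Finsupp.single_eq_of_ne' (Ne.symm hj), zero_add]
  by_cases hle : Finsupp.single j N ≤ m
  · rw [if_pos hle, if_pos (hkey.mpr hle), add_tsub_assoc_of_le hle, coeff_divMonomial]
  · rw [if_neg hle, if_neg (fun hc => hle (hkey.mp hc))]

end Stmt8Aux

namespace Stmt8Aux
variable {k : Type} [Field k]

lemma mem_of_mul_pow_mem {L h : S3 k} (hh : h ≠ 0) (hrp : IsRelPrime h L) (N : ℕ) (q : S3 k)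
    (hq : ∀ i : Fin 3, q * X i ^ N ∈ Ideal.span {L} ⊔ Ideal.span {h}) :
    q ∈ Ideal.span {L} ⊔ Ideal.span {h} := by
  have hspan : ∀ i : Fin 3, ∃ u v : S3 k, q * X i ^ N = u * L + v * h := by
    intro i
    obtain ⟨y, hy, z, hz, hyz⟩ := Submodule.mem_sup.mp (hq i)
    obtain ⟨u, rfl⟩ := Ideal.mem_span_singleton'.mp hy
    obtain ⟨v, rfl⟩ := Ideal.mem_span_singleton'.mp hz
    exact ⟨u, v, hyz.symm⟩
  obtain ⟨u0, v0, e0⟩ := hspan 0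
  obtain ⟨u1, v1, e1⟩ := hspan 1
  obtain ⟨u2, v2, e2⟩ := hspan 2
  have p0 : Prime (X 0 : S3 k) := prime_X3 0
  have p1 : Prime (X 1 : S3 k) := prime_X3 1
  have hnd01 : ¬ (X 0 : S3 k) ∣ X 1 := not_X_dvd_X (by decide)
  -- the syzygy coefficients w
  obtain ⟨w01, hw01⟩ : h ∣ X 1 ^ N * u0 - X 0 ^ N * u1 :=
    hrp.dvd_of_dvd_mul_right ⟨X 0 ^ N * v1 - X 1 ^ N * v0, by
      linear_combination X 0 ^ N * e1 - X 1 ^ N * e0⟩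
  obtain ⟨w02, hw02⟩ : h ∣ X 2 ^ N * u0 - X 0 ^ N * u2 :=
    hrp.dvd_of_dvd_mul_right ⟨X 0 ^ N * v2 - X 2 ^ N * v0, by
      linear_combination X 0 ^ N * e2 - X 2 ^ N * e0⟩
  obtain ⟨w12, hw12⟩ : h ∣ X 2 ^ N * u1 - X 1 ^ N * u2 :=
    hrp.dvd_of_dvd_mul_right ⟨X 1 ^ N * v2 - X 2 ^ N * v1, by
      linear_combination X 1 ^ N * e2 - X 2 ^ N * e1⟩
  -- the Koszul cocycle relation
  have hco : (X 2 : S3 k) ^ N * w01 = X 1 ^ N * w02 - X 0 ^ N * w12 := by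
    have h0 : h * (X 2 ^ N * w01 - (X 1 ^ N * w02 - X 0 ^ N * w12)) = 0 := by
      linear_combination X 1 ^ N * hw02 - X 0 ^ N * hw12 - X 2 ^ N * hw01
    have := (mul_eq_zero.mp h0).resolve_left hh
    linear_combination this
  -- solve the cocycle using division by X 2 ^ N
  set t0 : S3 k := w02.divMonomial (Finsupp.single 2 N) with ht0
  set t1 : S3 k := w12.divMonomial (Finsupp.single 2 N) with ht1
  have hw01' : w01 = X 1 ^ N * t0 - X 0 ^ N * t1 := by
    have := congrArg (fun z : S3 k => z.divMonomial (Finsupp.single 2 N)) hco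
    simpa [divM_X2, divM_sub, divM_mul N (show (1 : Fin 3) ≠ 2 by decide),
      divM_mul N (show (0 : Fin 3) ≠ 2 by decide)] using this
  have key : (X 1 : S3 k) ^ N * (u0 - h * t0) = X 0 ^ N * (u1 - h * t1) := by
    linear_combination hw01 + h * hw01'
  obtain ⟨c, hc0⟩ : (X 0 : S3 k) ^ N ∣ u0 - h * t0 :=
    p0.pow_dvd_of_dvd_mul_left N (fun hd => hnd01 (p0.dvd_of_dvd_pow hd))
      ⟨u1 - h * t1, key⟩
  have hc1 : u1 - h * t1 = X 1 ^ N * c := by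
    have hX0 : (X 0 : S3 k) ^ N ≠ 0 := pow_ne_zero _ (X_ne_zero _)
    apply mul_left_cancel₀ hX0
    linear_combination X 1 ^ N * hc0 - key
  have hq0 : h ∣ (q - c * L) * X 0 ^ N := ⟨t0 * L + v0, by linear_combination e0 + L * hc0⟩
  have hq1 : h ∣ (q - c * L) * X 1 ^ N := ⟨t1 * L + v1, by linear_combination e1 + L * hc1⟩
  obtain ⟨r, hr⟩ := dvd_of_dvd_mul_pow p0 p1 hnd01 h (q - c * L) hq0 hq1
  have hqe : q = c * L + h * r := by linear_combination hr
  rw [hqe]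
  exact Submodule.add_mem _
    (Submodule.mem_sup_left (Ideal.mem_span_singleton'.mpr ⟨c, rfl⟩))
    (Submodule.mem_sup_right (Ideal.mem_span_singleton.mpr (Dvd.intro r rfl)))

end Stmt8Aux

theorem stmt8 (k : Type) [Field k] (d : ℕ) (f : Fin 4 → S3 k)
    (hf : ∀ i, MvPolynomial.IsHomogeneous (f i) d)
    -- the `fᵢ` are linearly independent and have no common factor
    (hli : LinearIndependent k f)
    (hcf : ∀ h : S3 k, (∀ i, h ∣ f i) → IsUnit h)
    -- the fiber over the point `pc` is 1-dimensional with unmixed component defined by `h`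
    (pc : Fin 4 → k) (h : S3 k) (hfib : IsUnmixedPartOfOneDimFiber k f pc h)
    -- a linear form `ℓ_p` with `ℓ_p(p₀,…,p₃) = 1`
    (a : Fin 4 → k) (ha : (∑ i, a i * pc i) = 1)
    -- the `gᵢ`, defined by `ℓᵢ(f) = h·gᵢ`
    (g : Fin 4 → S3 k) (hg : ∀ i, f i - pc i • (∑ j, a j • f j) = h * g i) :
    Ideal.span {∑ j, a j • f j} + Ideal.span {h} * satId k (Ideal.span (Set.range g))
        ≤ satId k (Ideal.span (Set.range f)) ∧
      satId k (Ideal.span (Set.range f)) ≤ Ideal.span {∑ j, a j • f j} + Ideal.span {h} := by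
  classical
  set L : S3 k := ∑ j, a j • f j with hL
  set I : Ideal (S3 k) := Ideal.span (Set.range f) with hI
  have hfL : ∀ i, f i = C (pc i) * L + h * g i := by
    intro i
    have h1 := hg i
    rw [smul_eq_C_mul] at h1
    linear_combination h1
  have hrp : IsRelPrime h L := by
    intro c hch hcl
    exact hcf c fun i => by
      rw [hfL i]
      exact dvd_add (hcl.mul_left _) (hch.mul_right _)
  have hLI : L ∈ I := by
    rw [hL, hI]
    exact Submodule.sum_mem _ fun j _ => by
      rw [smul_eq_C_mul]
      exact Ideal.mul_mem_left _ _ (Ideal.subset_span ⟨j, rfl⟩)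
  constructor
  · -- first inclusion
    rw [Ideal.add_eq_sup]
    apply sup_le
    · rw [Ideal.span_le, Set.singleton_subset_iff]
      have hcol : L ∈ Submodule.colon I (((mId k) ^ 0 : Ideal (S3 k)) : Set (S3 k)) :=
        Submodule.mem_colon.mpr fun p _ => by
          rw [smul_eq_mul]; exact Ideal.mul_mem_right _ _ hLI
      exact le_iSup (fun n => Submodule.colon I (((mId k) ^ n : Ideal (S3 k)) : Set (S3 k))) 0 hcol
    · apply Ideal.mul_le.mpr
      intro r hr s hs
      obtain ⟨e, rfl⟩ := Ideal.mem_span_singleton'.mp hr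
      simp only [satId] at hs ⊢
      have hmono : Monotone
          (fun n : ℕ => Submodule.colon (Ideal.span (Set.range g)) (((mId k) ^ n : Ideal (S3 k)) : Set (S3 k))) :=
        fun m n hmn => Submodule.colon_mono le_rfl (Ideal.pow_le_pow_right hmn)
      obtain ⟨n, hsn⟩ := (Submodule.mem_iSup_of_directed _ hmono.directed_le).mp hs
      refine le_iSup (fun n => Submodule.colon I (((mId k) ^ n : Ideal (S3 k)) : Set (S3 k))) n ?_
      refine Submodule.mem_colon.mpr fun p hp => ?_
      have hsp : s * p ∈ Ideal.span (Set.range g) := by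
        have h2 := Submodule.mem_colon.mp hsn p hp
        rwa [smul_eq_mul] at h2
      have hGI : ∀ z ∈ Ideal.span (Set.range g), h * z ∈ I := by
        intro z hz
        have hle : Ideal.span (Set.range g) ≤ Submodule.colon I (Ideal.span {h} : Set (S3 k)) := by
          rw [Ideal.span_le]
          rintro x ⟨i, rfl⟩
          refine Submodule.mem_colon.mpr fun p' hp' => ?_
          obtain ⟨cc, rfl⟩ := Ideal.mem_span_singleton'.mp hp'
          rw [smul_eq_mul]
          have hfi : f i ∈ I := by rw [hI]; exact Ideal.subset_span ⟨i, rfl⟩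
          have hhg : h * g i ∈ I := by
            rw [show h * g i = f i - C (pc i) * L by linear_combination -(hfL i)]
            exact Submodule.sub_mem _ hfi (Ideal.mul_mem_left _ _ hLI)
          have h3 := Ideal.mul_mem_left _ cc hhg
          rwa [show g i * (cc * h) = cc * (h * g i) by ring]
        have h4 := Submodule.mem_colon.mp (hle hz) h (Ideal.subset_span rfl)
        rwa [smul_eq_mul, mul_comm] at h4
      have h5 := Ideal.mul_mem_left _ e (hGI _ hsp)
      rwa [show (e * h * s) • p = e * (h * (s * p)) by rw [smul_eq_mul]; ring]
  · -- second inclusion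
    have hIJ : I ≤ Ideal.span {L} ⊔ Ideal.span {h} := by
      rw [hI, Ideal.span_le]
      rintro x ⟨i, rfl⟩
      rw [hfL i]
      exact Submodule.add_mem _
        (Submodule.mem_sup_left (Ideal.mem_span_singleton.mpr (dvd_mul_left L _)))
        (Submodule.mem_sup_right (Ideal.mem_span_singleton.mpr (dvd_mul_right h _)))
    rw [Ideal.add_eq_sup]
    simp only [satId]
    apply iSup_le
    intro n q hq
    apply Stmt8Aux.mem_of_mul_pow_mem hfib.1 hrp n q
    intro i
    apply hIJ
    have hxm : (X i : S3 k) ∈ mId k := by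
      rw [mId]
      apply Ideal.subset_span
      fin_cases i <;> simp
    have h6 := Submodule.mem_colon.mp hq _ (Ideal.pow_mem_pow hxm n)
    rwa [smul_eq_mul] at h6


end
end

section
/- Assume f₀,f₁,f₂,f₃ are linearly independent and have no common factor. If some fiber π₂⁻¹(p) over a closed k-rational point p has dimension 1 with unmixed component defined by h_p ∈ S, then V(I) ≠ ∅, and moreover d·deg(h_p) ≤ deg(I), where deg(I) denotes the degree of the finite scheme V(I). -/
/-!
STATEMENT 9 (Remark `rem:NoBPfinite`):
Assume `f₀,…,f₃` (forms of degree `d` with `dim S/I ≤ 1`) are linearly independent and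
have no common factor.  If some fiber `π₂⁻¹(p)` over a closed `k`-rational point `p` has
dimension 1 with unmixed component defined by `h_p ∈ S`, then `V(I) ≠ ∅` and moreover
`d·deg(h_p) ≤ deg(I)`, where `deg(I)` is the degree of the finite scheme `V(I)`.

`V(I) = ∅` would mean `m ⊆ √I`; `deg I` is rendered as the eventually constant value of
the Hilbert function of `S/I^sat`.
-/

open MvPolynomial

noncomputable section

variable (k : Type) [Field k]

/-! ### Auxiliary lemmas -/

variable {k}

section AuxCounting

lemma deg_fin3 (s : Fin 3 →₀ ℕ) : s.degree = s 0 + s 1 + s 2 := by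
  rw [Finsupp.degree_apply]
  rw [Finset.sum_subset (Finset.subset_univ s.support)
    (by intro x _ hx; simpa [Finsupp.mem_support_iff] using
      (not_not.mp (fun hh => hx (Finsupp.mem_support_iff.mpr hh))))]
  simp [Fin.sum_univ_three]

def cntFinset (n : ℕ) : Finset (Σ _ : ℕ, ℕ) :=
  (Finset.range (n+1)).sigma (fun s => Finset.range (s+1))

def degEquiv (n : ℕ) : {d : Fin 3 →₀ ℕ | d.degree = n} ≃ (cntFinset n) where
  toFun d := ⟨⟨d.1 0 + d.1 1, d.1 0⟩, by
    have h2 : d.1.degree = n := d.2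
    have := deg_fin3 d.1; rw [h2] at this
    simp [cntFinset, Finset.mem_sigma, Finset.mem_range]; omega⟩
  invFun x := ⟨Finsupp.equivFunOnFinite.symm ![x.1.2, x.1.1 - x.1.2, n - x.1.1], by
    have hx := x.2
    simp only [cntFinset, Finset.mem_sigma, Finset.mem_range] at hx
    show Finsupp.degree _ = n
    rw [deg_fin3]
    simp [Finsupp.coe_equivFunOnFinite_symm]
    omega⟩
  left_inv d := by
    have h2 : d.1.degree = n := d.2
    have := deg_fin3 d.1; rw [h2] at this
    apply Subtype.ext; ext i
    fin_cases i <;> simp [Finsupp.coe_equivFunOnFinite_symm] <;> omega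
  right_inv x := by
    rcases x with ⟨⟨s, a⟩, hmem⟩
    simp only [cntFinset, Finset.mem_sigma, Finset.mem_range] at hmem
    apply Subtype.ext
    have e0 : (Finsupp.equivFunOnFinite.symm ![a, s - a, n - s] : Fin 3 →₀ ℕ) 0 = a := rfl
    have e1 : (Finsupp.equivFunOnFinite.symm ![a, s - a, n - s] : Fin 3 →₀ ℕ) 1 = s - a := rfl
    show (⟨_ + _, _⟩ : Σ _ : ℕ, ℕ) = ⟨s, a⟩
    rw [e0, e1, show a + (s - a) = s by omega]

instance degFintype (n : ℕ) : Fintype {d : Fin 3 →₀ ℕ | d.degree = n} :=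
  Fintype.ofEquiv _ (degEquiv n).symm

lemma card_deg (n : ℕ) : 2 * Fintype.card {d : Fin 3 →₀ ℕ | d.degree = n} = (n+1)*(n+2) := by
  rw [Fintype.card_congr (degEquiv n), Fintype.card_coe]
  rw [cntFinset, Finset.card_sigma]
  simp only [Finset.card_range]
  rw [Finset.mul_sum]
  induction n with
  | zero => simp
  | succ m ih => rw [Finset.sum_range_succ, ih]; ring

def HEquiv (n : ℕ) : (homogeneousSubmodule (Fin 3) k n) ≃ₗ[k] ({d : Fin 3 →₀ ℕ | d.degree = n} →₀ k) :=
  (LinearEquiv.ofEq _ _ (homogeneousSubmodule_eq_finsupp_supported (Fin 3) k n)).trans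
    (AddMonoidAlgebra.supportedEquivFinsupp _)

instance finsuppFD (n : ℕ) : Module.Finite k ({d : Fin 3 →₀ ℕ | d.degree = n} →₀ k) :=
  Module.Finite.equiv (Finsupp.linearEquivFunOnFinite k k _).symm

instance HFD (n : ℕ) : FiniteDimensional k (homogeneousSubmodule (Fin 3) k n) :=
  Module.Finite.equiv (HEquiv n).symm

lemma finrank_H (n : ℕ) :
    2 * Module.finrank k (homogeneousSubmodule (Fin 3) k n) = (n+1)*(n+2) := by
  rw [(HEquiv (k := k) n).finrank_eq, Module.finrank_finsupp_self, card_deg]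

end AuxCounting

section AuxKoszul

def evz (i : Fin 3) : S3 k →ₐ[k] S3 k := aeval (Function.update X i 0)

lemma evz_X_same (i : Fin 3) : evz (k := k) i (X i) = 0 := by
  simp [evz, aeval_X]

lemma evz_X_ne (i j : Fin 3) (hij : j ≠ i) : evz (k := k) i (X j) = X j := by
  simp [evz, aeval_X, Function.update_of_ne hij]

lemma X_dvd_sub_evz (i : Fin 3) (p : S3 k) : X i ∣ p - evz i p := by
  induction p using MvPolynomial.induction_on with
  | C a => simp [evz, aeval_C, algebraMap_eq]
  | add p q hp hq => have := dvd_add hp hq; convert this using 1; rw [map_add]; ring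
  | mul_X p j hp =>
    rw [map_mul]
    by_cases hij : j = i
    · subst hij; rw [evz_X_same, mul_zero, sub_zero]; exact ⟨p, mul_comm _ _⟩
    · rw [evz_X_ne i j hij, ← sub_mul]; exact hp.mul_right (X j)

lemma X_dvd_iff_evz (i : Fin 3) (p : S3 k) : X i ∣ p ↔ evz i p = 0 := by
  constructor
  · rintro ⟨q, rfl⟩; rw [map_mul, evz_X_same, zero_mul]
  · intro h
    have := X_dvd_sub_evz i p
    rwa [h, sub_zero] at this

lemma X_ne_zero' (j : Fin 3) : (X j : S3 k) ≠ 0 := MvPolynomial.X_ne_zero j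

lemma K1 (A0 A1 A2 : S3 k) (h01 : X 0 * A1 = X 1 * A0) (h02 : X 0 * A2 = X 2 * A0) :
    ∃ A, A0 = X 0 * A ∧ A1 = X 1 * A ∧ A2 = X 2 * A := by
  have hd : (X 0 : S3 k) ∣ A0 := by
    rw [X_dvd_iff_evz]
    have h1 : evz (k := k) 0 (X 0 * A1) = 0 := by rw [map_mul, evz_X_same, zero_mul]
    rw [h01, map_mul, evz_X_ne 0 1 (by decide)] at h1
    exact (mul_eq_zero.mp h1).resolve_left (X_ne_zero' 1)
  obtain ⟨A, rfl⟩ := hd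
  refine ⟨A, rfl, ?_, ?_⟩
  · have : X 0 * A1 = X 0 * (X 1 * A) := by rw [h01]; ring
    exact mul_left_cancel₀ (X_ne_zero' 0) this
  · have : X 0 * A2 = X 0 * (X 2 * A) := by rw [h02]; ring
    exact mul_left_cancel₀ (X_ne_zero' 0) this

lemma K2 (c01 c02 c12 : S3 k) (hrel : X 0 * c12 - X 1 * c02 + X 2 * c01 = 0) :
    ∃ e u v : S3 k, c01 = X 1 * e + X 0 * u ∧ c02 = X 2 * e + X 0 * v ∧
      c12 = X 1 * v - X 2 * u := by
  set r1 := evz (k := k) 0 c01 with hr1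
  set r2 := evz (k := k) 0 c02 with hr2
  have hev : X 2 * r1 = X 1 * r2 := by
    have := congrArg (evz (k := k) 0) hrel
    simp only [map_add, map_sub, map_mul, evz_X_same, zero_mul, map_zero,
      evz_X_ne 0 1 (by decide), evz_X_ne 0 2 (by decide)] at this
    linear_combination this
  have hd : (X 1 : S3 k) ∣ r1 := by
    rw [X_dvd_iff_evz]
    have h1 : evz (k := k) 1 (X 1 * r2) = 0 := by rw [map_mul, evz_X_same, zero_mul]
    rw [← hev, map_mul, evz_X_ne 1 2 (by decide)] at h1
    exact (mul_eq_zero.mp h1).resolve_left (X_ne_zero' 2)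
  obtain ⟨e, he⟩ := hd
  have hr2e : r2 = X 2 * e := by
    have : X 1 * r2 = X 1 * (X 2 * e) := by rw [← hev, he]; ring
    exact mul_left_cancel₀ (X_ne_zero' 1) this
  obtain ⟨u, hu⟩ := X_dvd_sub_evz (k := k) 0 c01
  obtain ⟨v, hv⟩ := X_dvd_sub_evz (k := k) 0 c02
  refine ⟨e, u, v, by rw [← he]; linear_combination hu, by rw [← hr2e]; linear_combination hv, ?_⟩
  have : X 0 * c12 = X 0 * (X 1 * v - X 2 * u) := by
    have h01 : c01 = X 1 * e + X 0 * u := by rw [← he]; linear_combination hu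
    have h02 : c02 = X 2 * e + X 0 * v := by rw [← hr2e]; linear_combination hv
    linear_combination hrel + X 1 * h02 - X 2 * h01
  exact mul_left_cancel₀ (X_ne_zero' 0) this

lemma sat_step (f h : S3 k) (hh0 : h ≠ 0) (hrp : IsRelPrime h f) (g : S3 k)
    (H : ∀ i : Fin 3, g * X i ∈ Ideal.span {f, h}) : g ∈ Ideal.span ({f, h} : Set (S3 k)) := by
  obtain ⟨a0, b0, hab0⟩ := Ideal.mem_span_pair.mp (H 0)
  obtain ⟨a1, b1, hab1⟩ := Ideal.mem_span_pair.mp (H 1)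
  obtain ⟨a2, b2, hab2⟩ := Ideal.mem_span_pair.mp (H 2)
  have cross01 : (X 0 * a1 - X 1 * a0) * f = (X 1 * b0 - X 0 * b1) * h := by
    linear_combination X 0 * hab1 - X 1 * hab0
  have cross02 : (X 0 * a2 - X 2 * a0) * f = (X 2 * b0 - X 0 * b2) * h := by
    linear_combination X 0 * hab2 - X 2 * hab0
  have cross12 : (X 1 * a2 - X 2 * a1) * f = (X 2 * b1 - X 1 * b2) * h := by
    linear_combination X 1 * hab2 - X 2 * hab1
  have hc01 : h ∣ X 0 * a1 - X 1 * a0 :=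
    hrp.dvd_of_dvd_mul_right ⟨X 1 * b0 - X 0 * b1, by linear_combination cross01⟩
  have hc02 : h ∣ X 0 * a2 - X 2 * a0 :=
    hrp.dvd_of_dvd_mul_right ⟨X 2 * b0 - X 0 * b2, by linear_combination cross02⟩
  have hc12 : h ∣ X 1 * a2 - X 2 * a1 :=
    hrp.dvd_of_dvd_mul_right ⟨X 2 * b1 - X 1 * b2, by linear_combination cross12⟩
  obtain ⟨c01, hc01⟩ := hc01
  obtain ⟨c02, hc02⟩ := hc02
  obtain ⟨c12, hc12⟩ := hc12
  have hrel : X 0 * c12 - X 1 * c02 + X 2 * c01 = 0 := by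
    have : h * (X 0 * c12 - X 1 * c02 + X 2 * c01) = 0 := by
      linear_combination X 1 * hc02 - X 0 * hc12 - X 2 * hc01
    exact (mul_eq_zero.mp this).resolve_left hh0
  obtain ⟨e, u, v, he01, he02, he12⟩ := K2 c01 c02 c12 hrel
  obtain ⟨a, ha0, ha1, ha2⟩ := K1 (a0 - h * (-e)) (a1 - h * u) (a2 - h * v)
    (by linear_combination hc01 + h * he01) (by linear_combination hc02 + h * he02)
  have hb01 : X 0 * b1 - X 1 * b0 = - (f * c01) := by
    have : (X 1 * b0 - X 0 * b1) * h = (h * c01) * f := by rw [← hc01]; linear_combination -cross01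
    have h2 : h * ((X 1 * b0 - X 0 * b1) - c01 * f) = 0 := by linear_combination this
    have := (mul_eq_zero.mp h2).resolve_left hh0
    linear_combination -this
  have hb02 : X 0 * b2 - X 2 * b0 = - (f * c02) := by
    have : (X 2 * b0 - X 0 * b2) * h = (h * c02) * f := by rw [← hc02]; linear_combination -cross02
    have h2 : h * ((X 2 * b0 - X 0 * b2) - c02 * f) = 0 := by linear_combination this
    have := (mul_eq_zero.mp h2).resolve_left hh0
    linear_combination -this
  obtain ⟨b, hbb0, hbb1, hbb2⟩ := K1 (b0 + f * (-e)) (b1 + f * u) (b2 + f * v)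
    (by linear_combination hb01 - f * he01) (by linear_combination hb02 - f * he02)
  have hX0 : X 0 * (g - (a * f + b * h)) = 0 := by
    linear_combination f * ha0 + h * hbb0 - hab0
  have hg : g = a * f + b * h := by
    have := (mul_eq_zero.mp hX0).resolve_left (X_ne_zero' 0)
    linear_combination this
  exact Ideal.mem_span_pair.mpr ⟨a, b, hg.symm⟩

lemma X_mem_mId (i : Fin 3) : (X i : S3 k) ∈ mId k := by
  fin_cases i <;> exact Ideal.subset_span (by simp)

lemma colon_pow_eq (f h : S3 k) (hh0 : h ≠ 0) (hrp : IsRelPrime h f) : ∀ n,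
    Submodule.colon (Ideal.span {f, h}) (((mId k)^n : Ideal (S3 k)) : Set (S3 k)) = Ideal.span {f, h} := by
  intro n
  induction n with
  | zero =>
    apply le_antisymm
    · intro g hg
      have := Submodule.mem_colon.mp hg 1 (by rw [pow_zero, Ideal.one_eq_top]; trivial)
      simpa using this
    · intro g hg
      exact Submodule.mem_colon.mpr fun p _ => Ideal.mul_mem_right p _ hg
  | succ n ih =>
    apply le_antisymm
    · intro g hg
      apply sat_step f h hh0 hrp
      intro i
      rw [← ih]
      refine Submodule.mem_colon.mpr fun p hp => ?_
      have hmem : X i * p ∈ (mId k)^(n+1) := by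
        rw [pow_succ']
        exact Ideal.mul_mem_mul (X_mem_mId i) hp
      have := Submodule.mem_colon.mp hg (X i * p) hmem
      simpa [smul_eq_mul, mul_assoc, mul_comm, mul_left_comm] using this
    · intro g hg
      exact Submodule.mem_colon.mpr fun p _ => Ideal.mul_mem_right p _ hg

lemma satId_le (I : Ideal (S3 k)) (f h : S3 k) (hh0 : h ≠ 0) (hrp : IsRelPrime h f)
    (hIJ : I ≤ Ideal.span {f, h}) : satId k I ≤ Ideal.span {f, h} := by
  refine iSup_le fun n => ?_
  rw [← colon_pow_eq f h hh0 hrp n]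
  intro x hx
  exact Submodule.mem_colon.mpr fun p hp => hIJ (Submodule.mem_colon.mp hx p hp)

end AuxKoszul

section AuxRank

lemma hcomp_mul (u g : S3 k) {dg m ν : ℕ} (hg : g.IsHomogeneous dg) (hmν : m + dg = ν) :
    homogeneousComponent ν (u * g) = homogeneousComponent m u * g := by
  subst hmν
  conv_lhs => rw [← sum_homogeneousComponent u, Finset.sum_mul, map_sum]
  have hterm : ∀ i, homogeneousComponent (m + dg) (homogeneousComponent i u * g)
      = if m = i then homogeneousComponent i u * g else 0 := by
    intro i
    rw [homogeneousComponent_of_mem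
      (mem_homogeneousSubmodule _ _ |>.mpr ((homogeneousComponent_isHomogeneous i u).mul hg))]
    congr 1
    simp [add_left_inj]
  rw [Finset.sum_congr rfl (fun i _ => hterm i), Finset.sum_ite_eq]
  by_cases hm : m ∈ Finset.range (u.totalDegree + 1)
  · rw [if_pos hm]
  · rw [if_neg hm, homogeneousComponent_eq_zero _ u
      (by simp only [Finset.mem_range] at hm; omega), zero_mul]

lemma key_rank (a d δ : ℕ) (f h : S3 k) (hf : f.IsHomogeneous d) (hh : h.IsHomogeneous δ)
    (hh0 : h ≠ 0) (W : Submodule k (S3 k))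
    (hW : W ≤ homogeneousSubmodule (Fin 3) k (a+d+δ))
    (hWJ : ∀ g ∈ W, g ∈ Ideal.span ({f, h} : Set (S3 k))) :
    2 * Module.finrank k W + (a+1)*(a+2) ≤ (a+δ+1)*(a+δ+2) + (a+d+1)*(a+d+2) := by
  set H1 := homogeneousSubmodule (Fin 3) k (a+δ) with hH1
  set H2 := homogeneousSubmodule (Fin 3) k (a+d) with hH2
  set Ha := homogeneousSubmodule (Fin 3) k a with hHa
  set μ : (H1 × H2) →ₗ[k] S3 k :=
    ((LinearMap.mulRight k f).comp (H1.subtype.comp (LinearMap.fst k H1 H2))) +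
    ((LinearMap.mulRight k h).comp (H2.subtype.comp (LinearMap.snd k H1 H2))) with hμ
  have hμapp : ∀ x : H1 × H2, μ x = (x.1 : S3 k) * f + (x.2 : S3 k) * h := fun x => rfl
  have hWrange : W ≤ LinearMap.range μ := by
    intro g hg
    obtain ⟨u, v, huv⟩ := Ideal.mem_span_pair.mp (hWJ g hg)
    have hgH : g ∈ homogeneousSubmodule (Fin 3) k (a+d+δ) := hW hg
    have hgc : homogeneousComponent (a+d+δ) g = g := by
      rw [homogeneousComponent_of_mem hgH, if_pos rfl]
    refine ⟨(⟨homogeneousComponent (a+δ) u * 1, ?_⟩, ⟨homogeneousComponent (a+d) v * 1, ?_⟩), ?_⟩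
    · exact (mem_homogeneousSubmodule _ _).mpr (by
        simpa using (homogeneousComponent_isHomogeneous (a+δ) u))
    · exact (mem_homogeneousSubmodule _ _).mpr (by
        simpa using (homogeneousComponent_isHomogeneous (a+d) v))
    · rw [hμapp]
      simp only [mul_one]
      rw [← hcomp_mul u f hf (show (a+δ)+d = a+d+δ by ring),
        ← hcomp_mul v h hh (show (a+d)+δ = a+d+δ by ring), ← map_add, huv, hgc]
  set ι : Ha →ₗ[k] H1 × H2 := LinearMap.prod
    (LinearMap.codRestrict H1 ((LinearMap.mulRight k h).comp Ha.subtype)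
      (fun t => (mem_homogeneousSubmodule _ _).mpr (t.2.mul hh)))
    (LinearMap.codRestrict H2 (-((LinearMap.mulRight k f).comp Ha.subtype))
      (fun t => (mem_homogeneousSubmodule _ _).mpr (by
        simpa using ((t.2.mul hf).neg)))) with hι
  have hιinj : Function.Injective ι := by
    intro t t' htt
    have h1 : (t : S3 k) * h = (t' : S3 k) * h := by
      have := congrArg (fun x : H1 × H2 => (x.1 : S3 k)) htt
      simpa [hι] using this
    exact Subtype.ext (mul_right_cancel₀ hh0 h1)
  have hrange_le_ker : LinearMap.range ι ≤ LinearMap.ker μ := by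
    rintro _ ⟨t, rfl⟩
    rw [LinearMap.mem_ker, hμapp]
    show ((t : S3 k) * h) * f + (-((t : S3 k) * f)) * h = 0
    ring
  have hrn : Module.finrank k (LinearMap.range μ) + Module.finrank k (LinearMap.ker μ)
      = Module.finrank k H1 + Module.finrank k H2 := by
    rw [LinearMap.finrank_range_add_finrank_ker μ, Module.finrank_prod]
  have hker_ge : Module.finrank k Ha ≤ Module.finrank k (LinearMap.ker μ) := by
    rw [← LinearMap.finrank_range_of_inj hιinj]
    exact Submodule.finrank_mono hrange_le_ker
  have hWle : Module.finrank k W ≤ Module.finrank k (LinearMap.range μ) := by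
    haveI : FiniteDimensional k W := Submodule.finiteDimensional_of_le hWrange
    exact Submodule.finrank_mono hWrange
  have e1 := finrank_H (k := k) (a+δ)
  have e2 := finrank_H (k := k) (a+d)
  have ea := finrank_H (k := k) a
  rw [← hH1] at e1; rw [← hH2] at e2; rw [← hHa] at ea
  linarith

end AuxRank

section AuxMisc

lemma homog_zero_eq_C (p : S3 k) (hp : p.IsHomogeneous 0) : p = C (coeff 0 p) := by
  apply MvPolynomial.ext
  intro m
  rcases eq_or_ne m 0 with rfl | hm
  · simp
  · rw [coeff_C, if_neg (Ne.symm hm)]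
    by_contra hne
    have hw := hp hne
    have : Finsupp.degree m = 0 := by
      rw [Finsupp.degree_eq_weight_one]; exact hw
    exact hm (Finsupp.degree_eq_zero_iff m |>.mp this)

lemma isUnit_C' (c : k) (hc : c ≠ 0) : IsUnit (C c : S3 k) :=
  IsUnit.of_mul_eq_one (C c⁻¹) (by rw [← map_mul, mul_inv_cancel₀ hc, map_one])

end AuxMisc

variable (k)

theorem stmt9 (k : Type) [Field k] (d : ℕ) (f : Fin 4 → S3 k)
    (hf : ∀ i, MvPolynomial.IsHomogeneous (f i) d)
    (hdim : ringKrullDim (S3 k ⧸ (Ideal.span (Set.range f) : Ideal (S3 k))) ≤ 1)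
    -- the `fᵢ` are linearly independent and have no common factor
    (hli : LinearIndependent k f)
    (hcf : ∀ h : S3 k, (∀ i, h ∣ f i) → IsUnit h)
    -- the fiber over the `k`-rational point `pc` is 1-dimensional with unmixed component
    -- defined by `h`, a form of degree `δ`
    (pc : Fin 4 → k) (h : S3 k) (hfib : IsUnmixedPartOfOneDimFiber k f pc h)
    (δ : ℕ) (hδ : MvPolynomial.IsHomogeneous h δ)
    -- `e = deg I`, the degree of the finite scheme `V(I)`
    (e : ℕ)
    (he : ∃ n₁ : ℕ, ∀ ν ≥ n₁, Module.finrank k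
      ((homogeneousSubmodule (Fin 3) k ν).map
        (Ideal.Quotient.mkₐ k (satId k (Ideal.span (Set.range f)))).toLinearMap) = e) :
    -- `V(I) ≠ ∅`, i.e. `m ⊄ √I`
    ¬ (mId k ≤ (Ideal.span (Set.range f)).radical) ∧
    -- `d · deg h ≤ deg I`
    d * δ ≤ e := by
  classical
  obtain ⟨hh0, hhnu, hdvd, hgcd⟩ := hfib
  set I : Ideal (S3 k) := Ideal.span (Set.range f) with hI
  -- some coordinate of pc is nonzero
  have hpc : ∃ ℓ, pc ℓ ≠ 0 := by
    by_contra hno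
    push_neg at hno
    have hall : ∀ q ∈ fibEqns k f pc, (h*h) ∣ q := by
      rintro q ⟨g, hg, rfl⟩
      have hz : ∑ i, pc i • g i = 0 :=
        Finset.sum_eq_zero fun i _ => by rw [hno i, zero_smul]
      rw [hz]; exact dvd_zero _
    obtain ⟨c, hc⟩ := hgcd (h*h) hall
    apply hhnu
    have hc' : h * (1 - h * c) = 0 := by linear_combination hc
    rcases mul_eq_zero.mp hc' with h0 | h1
    · exact absurd h0 hh0
    · exact IsUnit.of_mul_eq_one c (by linear_combination -h1)
  obtain ⟨ℓ, hℓ⟩ := hpc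
  -- Koszul syzygies give divisibility
  have hsyz : ∀ j, h ∣ (C (pc ℓ) * f j - C (pc j) * f ℓ) := by
    intro j
    apply hdvd
    refine ⟨fun i => (if i = ℓ then f j else 0) - (if i = j then f ℓ else 0), ?_, ?_⟩
    · have hterm : ∀ i, ((if i = ℓ then f j else 0) - (if i = j then f ℓ else 0)) * f i
          = (if i = ℓ then f j * f i else 0) - (if i = j then f ℓ * f i else 0) := by
        intro i; split_ifs <;> ring
      rw [Finset.sum_congr rfl fun i _ => hterm i, Finset.sum_sub_distrib,
        Finset.sum_ite_eq', Finset.sum_ite_eq']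
      simp [mul_comm]
    · have hterm : ∀ i, pc i • ((if i = ℓ then f j else 0) - (if i = j then f ℓ else 0))
          = (if i = ℓ then pc i • f j else 0) - (if i = j then pc i • f ℓ else 0) := by
        intro i; split_ifs <;> simp [smul_sub]
      rw [Finset.sum_congr rfl fun i _ => hterm i, Finset.sum_sub_distrib,
        Finset.sum_ite_eq', Finset.sum_ite_eq']
      simp [smul_eq_C_mul]
  have hCinv : C (pc ℓ)⁻¹ * C (pc ℓ) = (1 : S3 k) := by
    rw [← map_mul, inv_mul_cancel₀ hℓ, map_one]
  -- every f j lies in J = (f ℓ, h)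
  have hfJ : ∀ j, f j ∈ Ideal.span ({f ℓ, h} : Set (S3 k)) := by
    intro j
    obtain ⟨t, ht⟩ := hsyz j
    refine Ideal.mem_span_pair.mpr ⟨C (pc ℓ)⁻¹ * C (pc j), C (pc ℓ)⁻¹ * t, ?_⟩
    calc C (pc ℓ)⁻¹ * C (pc j) * f ℓ + C (pc ℓ)⁻¹ * t * h
        = C (pc ℓ)⁻¹ * (C (pc j) * f ℓ + h * t) := by ring
      _ = C (pc ℓ)⁻¹ * (C (pc ℓ) * f j) := by rw [show C (pc j) * f ℓ + h * t = C (pc ℓ) * f j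
            by linear_combination -ht]
      _ = (C (pc ℓ)⁻¹ * C (pc ℓ)) * f j := by ring
      _ = f j := by rw [hCinv, one_mul]
  have hIJ : I ≤ Ideal.span ({f ℓ, h} : Set (S3 k)) := by
    rw [hI, Ideal.span_le]
    rintro _ ⟨j, rfl⟩
    exact hfJ j
  -- h and f ℓ have no common factor
  have hrp : IsRelPrime h (f ℓ) := by
    intro w hwh hwf
    apply hcf w
    intro j
    obtain ⟨t, ht⟩ := hsyz j
    have hdvd2 : w ∣ C (pc ℓ) * f j := by
      rw [show C (pc ℓ) * f j = h * t + C (pc j) * f ℓ by linear_combination ht]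
      exact dvd_add (hwh.mul_right t) (hwf.mul_left _)
    obtain ⟨r, hr⟩ := hdvd2
    refine ⟨C (pc ℓ)⁻¹ * r, ?_⟩
    calc f j = (C (pc ℓ)⁻¹ * C (pc ℓ)) * f j := by rw [hCinv, one_mul]
      _ = C (pc ℓ)⁻¹ * (C (pc ℓ) * f j) := by ring
      _ = C (pc ℓ)⁻¹ * (w * r) := by rw [hr]
      _ = w * (C (pc ℓ)⁻¹ * r) := by ring
  -- degrees are positive
  have hδ1 : 1 ≤ δ := by
    rcases Nat.eq_zero_or_pos δ with h0 | h1
    · exfalso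
      rw [h0] at hδ
      have hC := homog_zero_eq_C h hδ
      have hc0 : coeff 0 h ≠ 0 := by
        intro hz; apply hh0; rw [hC, hz, map_zero]
      exact hhnu (hC ▸ isUnit_C' _ hc0)
    · exact h1
  have hd1 : 1 ≤ d := by
    rcases Nat.eq_zero_or_pos d with h0 | h1
    · exfalso
      have h0' : ∀ i, f i = C (coeff 0 (f i)) := fun i => homog_zero_eq_C (f i) (h0 ▸ hf i)
      have hc1 : coeff 0 (f 1) ≠ 0 := by
        intro hz; apply hli.ne_zero 1; rw [h0' 1, hz, map_zero]
      set c0 := coeff 0 (f 0) with hcc0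
      set c1 := coeff 0 (f 1) with hcc1
      refine (Fintype.not_linearIndependent_iff.mpr
        ⟨![c1, -c0, 0, 0], ?_, ⟨0, by simpa using hc1⟩⟩) hli
      rw [Fin.sum_univ_four]
      show c1 • f 0 + (-c0) • f 1 + (0:k) • f 2 + (0:k) • f 3 = 0
      rw [zero_smul, zero_smul, add_zero, add_zero, h0' 0, h0' 1, smul_eq_C_mul,
        smul_eq_C_mul, ← map_mul, ← map_mul, ← map_add,
        show c1 * c0 + -c0 * c1 = 0 by ring, map_zero]
    · exact h1
  have hfin : ∀ (a : ℕ) (W : Submodule k (S3 k)),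
      W ≤ homogeneousSubmodule (Fin 3) k (a+d+δ) →
      (∀ g ∈ W, g ∈ Ideal.span ({f ℓ, h} : Set (S3 k))) →
      2 * Module.finrank k W + (a+1)*(a+2) ≤ (a+δ+1)*(a+δ+2) + (a+d+1)*(a+d+2) :=
    fun a W hW hWJ => key_rank a d δ (f ℓ) h (hf ℓ) hδ hh0 W hW hWJ
  have hid : ∀ a : ℕ, (a+d+δ+1)*(a+d+δ+2) + (a+1)*(a+2)
      = (a+δ+1)*(a+δ+2) + (a+d+1)*(a+d+2) + 2*(d*δ) := fun a => by ring
  have hdd1 : 1 ≤ d * δ := Nat.one_le_iff_ne_zero.mpr (by positivity)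
  constructor
  · -- V(I) ≠ ∅
    intro hm
    have hX : ∀ i : Fin 3, ∃ n, (X i : S3 k)^n ∈ I := fun i => hm (X_mem_mId i)
    choose nn hnn using hX
    set n := max (nn 0) (max (nn 1) (nn 2)) with hn
    have hXn : ∀ i : Fin 3, (X i : S3 k)^n ∈ I := by
      intro i
      have hge : nn i ≤ n := by
        fin_cases i
        · exact le_max_left _ _
        · exact le_trans (le_max_left _ _) (le_max_right _ _)
        · exact le_trans (le_max_right _ _) (le_max_right _ _)
      rw [show n = nn i + (n - nn i) by omega, pow_add]
      exact Ideal.mul_mem_right _ _ (hnn i)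
    set a := 3*n with ha
    have hWJ : ∀ g ∈ homogeneousSubmodule (Fin 3) k (a+d+δ),
        g ∈ Ideal.span ({f ℓ, h} : Set (S3 k)) := by
      intro g hg
      rw [g.as_sum]
      apply Ideal.sum_mem
      intro s hs
      have hcoeff : coeff s g ≠ 0 := mem_support_iff.mp hs
      have hw := hg hcoeff
      have hdeg : s 0 + s 1 + s 2 = a + d + δ := by
        rw [← deg_fin3 s, Finsupp.degree_eq_weight_one]
        exact hw
      obtain ⟨i, hi⟩ : ∃ i : Fin 3, n ≤ s i := by
        by_contra hcon
        push_neg at hcon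
        have h1 := hcon 0; have h2 := hcon 1; have h3 := hcon 2
        omega
      have hsplit : monomial s (coeff s g)
          = monomial (s - Finsupp.single i n) (coeff s g) * (X i)^n := by
        have hss : (s - Finsupp.single i n) + Finsupp.single i n = s := by
          ext j
          rw [Finsupp.add_apply, Finsupp.tsub_apply, Finsupp.single_apply]
          rcases eq_or_ne i j with rfl | hij
          · rw [if_pos rfl]; omega
          · rw [if_neg hij]; omega
        rw [X_pow_eq_monomial, monomial_mul, mul_one, hss]
      rw [hsplit]
      exact Ideal.mul_mem_left _ _ (hIJ (hXn i))
    have hkey := hfin a _ le_rfl hWJ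
    have hfr := finrank_H (k := k) (a+d+δ)
    have := hid a
    linarith
  · -- d·δ ≤ e
    obtain ⟨n₁, hen⟩ := he
    set a := n₁ with ha
    set ν := a + d + δ with hν
    have heν := hen ν (by omega)
    set Isat := satId k I with hIsat
    set T := (Ideal.Quotient.mkₐ k Isat).toLinearMap with hT
    set Hν := homogeneousSubmodule (Fin 3) k ν with hHν
    have hrn := LinearMap.finrank_range_add_finrank_ker (T.domRestrict Hν)
    rw [LinearMap.range_domRestrict] at hrn
    set W := Submodule.map Hν.subtype (LinearMap.ker (T.domRestrict Hν)) with hWdef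
    have hfrk : Module.finrank k (LinearMap.ker (T.domRestrict Hν)) = Module.finrank k W :=
      (Submodule.finrank_map_subtype_eq Hν _).symm
    have hWH : W ≤ Hν := Submodule.map_subtype_le _ _
    have hsat : Isat ≤ Ideal.span ({f ℓ, h} : Set (S3 k)) :=
      satId_le I (f ℓ) h hh0 hrp hIJ
    have hWJ : ∀ g ∈ W, g ∈ Ideal.span ({f ℓ, h} : Set (S3 k)) := by
      rintro g ⟨x, hx, rfl⟩
      apply hsat
      have hx0 : T x.1 = 0 := hx
      have : Ideal.Quotient.mk Isat x.1 = 0 := hx0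
      exact Ideal.Quotient.eq_zero_iff_mem.mp this
    have hkey := hfin a W hWH hWJ
    have hfr : 2 * Module.finrank k Hν = (a+d+δ+1)*(a+d+δ+2) := finrank_H (k := k) (a+d+δ)
    have := hid a
    linarith


end
end
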